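/- arXiv:2202.02235 — 3 statements merged into one kernel-verified Lean document; each statement's English description precedes it below -/
import Mathlib

section
/- Let θ > 0 and w₀ > 0. If ρ > 0 and m are real numbers with |m|/ρ + (ρ^θ − 1)/θ ≤ w₀, then ρ · e^{|m|/ρ} ≤ e^{w₀}. -/
theorem stmt_2 (θ w₀ ρ m : ℝ) (hθ : 0 < θ) (hw : 0 < w₀) (hρ : 0 < ρ)
    (hinv : |m| / ρ + (ρ ^ θ - 1) / θ ≤ w₀) :
    ρ * Real.exp (|m| / ρ) ≤ Real.exp w₀ := by
  have h1 : θ * Real.log ρ + 1 ≤ ρ ^ θ := by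
    have := Real.add_one_le_exp (θ * Real.log ρ)
    rw [← Real.log_rpow hρ, Real.exp_log (Real.rpow_pos_of_pos hρ θ)] at this
    rwa [Real.log_rpow hρ] at this
  have hlog : Real.log ρ ≤ (ρ ^ θ - 1) / θ := by
    rw [le_div_iff₀ hθ]; linarith [mul_comm θ (Real.log ρ)]
  calc ρ * Real.exp (|m| / ρ) = Real.exp (Real.log ρ + |m| / ρ) := by
        rw [Real.exp_add, Real.exp_log hρ]
    _ ≤ Real.exp w₀ := Real.exp_le_exp.mpr (by linarith)
end

section
/- Let θ ∈ (0,1] and w₀ > 0. If ρ > 0 with |m|/ρ + (ρ^θ − 1)/θ ≤ w₀ and ρ ≤ e^{w₀}, then |m|/ρ^{2/3} ≤ w₀·e^{w₀/3} + 3·e^{−1}. -/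
theorem stmt_3 (θ w₀ ρ m : ℝ) (hθ : θ ∈ Set.Ioc (0:ℝ) 1) (hw : 0 < w₀) (hρ : 0 < ρ)
    (hinv : |m| / ρ + (ρ ^ θ - 1) / θ ≤ w₀) (hρb : ρ ≤ Real.exp w₀) :
    |m| / ρ ^ ((2:ℝ)/3) ≤ w₀ * Real.exp (w₀ / 3) + 3 * Real.exp (-1) := by
  obtain ⟨hθ0, hθ1⟩ := hθ
  set t := ρ ^ ((1:ℝ)/3) with ht
  have ht0 : 0 < t := Real.rpow_pos_of_pos hρ _
  have hsplit : ρ ^ ((2:ℝ)/3) * t = ρ := by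
    rw [ht, ← Real.rpow_add hρ]; norm_num
  have hkey : |m| / ρ ^ ((2:ℝ)/3) = |m| * t / ρ := by
    conv_rhs => rw [← hsplit]
    rw [mul_div_mul_right _ _ ht0.ne']
  -- step 1 : |m|/ρ ≤ w₀ - (ρ^θ-1)/θ
  have h1 : |m| / ρ ≤ w₀ - (ρ ^ θ - 1) / θ := by linarith
  -- step 2 : log ρ ≤ (ρ^θ-1)/θ
  have h2 : Real.log ρ ≤ (ρ ^ θ - 1) / θ := by
    have := Real.log_le_sub_one_of_pos (Real.rpow_pos_of_pos hρ θ)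
    rw [Real.log_rpow hρ] at this
    rw [le_div_iff₀ hθ0]
    linarith
  -- step 3 : t ≤ exp (w₀/3)
  have h3 : t ≤ Real.exp (w₀ / 3) := by
    have : t ≤ (Real.exp w₀) ^ ((1:ℝ)/3) :=
      Real.rpow_le_rpow hρ.le hρb (by norm_num)
    rwa [← Real.exp_mul, mul_one_div] at this
  -- step 4 : -t * log ρ ≤ 3 * exp (-1)
  have hlogt : Real.log t = Real.log ρ / 3 := by
    rw [ht, Real.log_rpow hρ]; ring
  have h4 : -(t * Real.log ρ) ≤ 3 * Real.exp (-1) := by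
    have hu : 0 < Real.exp (-1) / t := div_pos (Real.exp_pos _) ht0
    have := Real.log_le_sub_one_of_pos hu
    rw [Real.log_div (Real.exp_pos _).ne' ht0.ne', Real.log_exp] at this
    have h5 : -Real.log t ≤ Real.exp (-1) / t := by linarith
    have h6 : -(t * Real.log t) ≤ Real.exp (-1) := by
      have := mul_le_mul_of_nonneg_left h5 ht0.le
      rw [mul_div_cancel₀ _ ht0.ne'] at this
      linarith [this]
    rw [hlogt] at h6
    nlinarith [h6]
  -- combine
  rw [hkey, div_le_iff₀ hρ]
  have hmt : |m| * t / ρ * ρ = |m| * t := by field_simp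
  calc |m| * t = |m| / ρ * t * ρ := by field_simp
    _ ≤ (w₀ - (ρ ^ θ - 1) / θ) * t * ρ := by
        apply mul_le_mul_of_nonneg_right _ hρ.le
        exact mul_le_mul_of_nonneg_right h1 ht0.le
    _ ≤ (w₀ - Real.log ρ) * t * ρ := by
        apply mul_le_mul_of_nonneg_right _ hρ.le
        apply mul_le_mul_of_nonneg_right _ ht0.le
        linarith
    _ ≤ (w₀ * Real.exp (w₀ / 3) + 3 * Real.exp (-1)) * ρ := by
        apply mul_le_mul_of_nonneg_right _ hρ.le
        have hw₀t : w₀ * t ≤ w₀ * Real.exp (w₀ / 3) :=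
          mul_le_mul_of_nonneg_left h3 hw.le
        nlinarith [h4, hw₀t]
end

section
/- Let w₀ > 0 and θ ∈ (0,1]. Define the isentropic mechanical energy η*^{(θ)}(ρ,m) = m²/(2ρ) + ρ(ρ^{2θ} − 1)/(2θ(2θ+1)) and the isothermal mechanical energy η*^{(0)}(ρ,m) = m²/(2ρ) + ρ·ln ρ. Then there is a constant C = C(w₀) such that for all ρ ∈ (0, e^{w₀}] and all m with |m| ≤ ρ(|ln ρ| + w₀), one has |η*^{(θ)}(ρ,m) − η*^{(0)}(ρ,m)| ≤ C·θ. -/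
set_option maxHeartbeats 1000000

open Real

lemma aux_exp_nonneg (x : ℝ) : 0 ≤ Real.exp x - 1 - x := by
  have := Real.add_one_le_exp x; linarith

lemma aux_exp_quad (x : ℝ) :
    Real.exp x - 1 - x ≤ x ^ 2 * Real.exp (max x 0) := by
  have h1 : Real.exp x * (1 - x) ≤ 1 := by
    have h2 : 1 - x ≤ Real.exp (-x) := by
      have := Real.add_one_le_exp (-x); linarith
    calc Real.exp x * (1 - x) ≤ Real.exp x * Real.exp (-x) :=
          mul_le_mul_of_nonneg_left h2 (Real.exp_pos x).le
      _ = 1 := by rw [← Real.exp_add]; simp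
  rcases le_total x 0 with hx | hx
  · rw [max_eq_right hx, Real.exp_zero]
    nlinarith [Real.exp_pos x, sq_nonneg x, mul_nonneg (neg_nonneg.2 hx) (sq_nonneg x)]
  · rw [max_eq_left hx]
    have h4 : Real.exp x - 1 ≤ x * Real.exp x := by nlinarith [Real.exp_pos x]
    nlinarith [mul_le_mul_of_nonneg_left h4 hx, Real.add_one_le_exp x]

-- for 0 < ρ ≤ 1 : ρ (log ρ)^2 ≤ 4 and ρ |log ρ| ≤ 2
lemma aux_small (ρ : ℝ) (hρ0 : 0 < ρ) (hρ1 : ρ ≤ 1) :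
    ρ * (Real.log ρ) ^ 2 ≤ 4 ∧ ρ * |Real.log ρ| ≤ 2 := by
  set u : ℝ := -Real.log ρ with hu
  have hL : Real.log ρ ≤ 0 := Real.log_nonpos hρ0.le hρ1
  have hu0 : 0 ≤ u := by simp [hu]; linarith
  have hρeq : ρ = Real.exp (-u) := by
    rw [hu, neg_neg, Real.exp_log hρ0]
  have habs : |Real.log ρ| = u := by rw [abs_of_nonpos hL]
  have hue : u ≤ Real.exp u := by have := Real.add_one_le_exp u; linarith
  have h2 : u / 2 ≤ Real.exp (u / 2) := by
    have := Real.add_one_le_exp (u / 2); linarith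
  have hsq : u ^ 2 / 4 ≤ Real.exp u := by
    have := mul_le_mul h2 h2 (by linarith) (Real.exp_pos (u/2)).le
    rw [← Real.exp_add] at this
    have h42 : u / 2 + u / 2 = u := by ring
    rw [h42] at this
    nlinarith
  have hexp : Real.exp (-u) * Real.exp u = 1 := by
    rw [← Real.exp_add]; simp
  constructor
  · have h5 : (Real.log ρ) ^ 2 = u ^ 2 := by rw [hu]; ring
    rw [h5, hρeq]
    nlinarith [Real.exp_pos (-u), Real.exp_pos u]
  · rw [habs, hρeq]
    nlinarith [Real.exp_pos (-u), Real.exp_pos u]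

theorem stmt_19 (w₀ : ℝ) (hw : 0 < w₀) :
    ∃ C > 0, ∀ θ ∈ Set.Ioc (0:ℝ) 1, ∀ ρ ∈ Set.Ioc (0:ℝ) (Real.exp w₀),
      ∀ m : ℝ, |m| ≤ ρ * (|Real.log ρ| + w₀) →
        |(m ^ 2 / (2 * ρ) + ρ * (ρ ^ (2 * θ) - 1) / (2 * θ * (2 * θ + 1))) -
            (m ^ 2 / (2 * ρ) + ρ * Real.log ρ)| ≤ C * θ := by
  set C' : ℝ := w₀ ^ 2 * Real.exp (3 * w₀) + w₀ * Real.exp w₀ + 6 with hC'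
  have hC'pos : 0 < C' := by positivity
  refine ⟨2 * C', by positivity, ?_⟩
  rintro θ ⟨hθ0, hθ1⟩ ρ ⟨hρ0, hρe⟩ m _
  set t : ℝ := 2 * θ with htdef
  have ht0 : 0 < t := by positivity
  have ht2 : t ≤ 2 := by simp [htdef]; linarith
  set L : ℝ := Real.log ρ with hLdef
  set x : ℝ := L * t with hxdef
  have hrpow : ρ ^ t = Real.exp x := by
    rw [Real.rpow_def_of_pos hρ0]
  have hcancel : (m ^ 2 / (2 * ρ) + ρ * (ρ ^ t - 1) / (t * (t + 1))) -
      (m ^ 2 / (2 * ρ) + ρ * L) = ρ * (Real.exp x - 1) / (t * (t + 1)) - ρ * L := by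
    rw [hrpow]; ring
  rw [show (2 * θ * (2 * θ + 1)) = t * (t + 1) by rw [htdef], hcancel]
  set E : ℝ := Real.exp x - 1 - x with hE
  have hE0 : 0 ≤ E := aux_exp_nonneg x
  have hEle : E ≤ x ^ 2 * Real.exp (max x 0) := aux_exp_quad x
  have ht1 : (0:ℝ) < t + 1 := by linarith
  have hdecomp : ρ * (Real.exp x - 1) / (t * (t + 1)) - ρ * L
      = ρ * E / (t * (t + 1)) - ρ * x / (t + 1) := by
    rw [hE, hxdef]; field_simp; ring
  rw [hdecomp]
  have hbd1 : ρ * E / (t * (t + 1)) ≤ t * (ρ * (L ^ 2 * Real.exp (max x 0))) := by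
    have step1 : ρ * E / (t * (t + 1)) ≤ ρ * E / t := by
      apply div_le_div_of_nonneg_left (by positivity) ht0
      nlinarith
    have step2 : ρ * E / t ≤ ρ * (x ^ 2 * Real.exp (max x 0)) / t := by
      exact (div_le_div_iff_of_pos_right ht0).mpr (mul_le_mul_of_nonneg_left hEle hρ0.le)
    have step3 : ρ * (x ^ 2 * Real.exp (max x 0)) / t
        = t * (ρ * (L ^ 2 * Real.exp (max x 0))) := by
      rw [hxdef]; field_simp
    linarith [step1, step2, step3.le]
  have hbd2 : ρ * |x| / (t + 1) ≤ t * (ρ * |L|) := by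
    have hx_abs : |x| = |L| * t := by
      rw [hxdef, abs_mul, abs_of_pos ht0]
    rw [hx_abs]
    have : ρ * (|L| * t) / (t + 1) ≤ ρ * (|L| * t) := by
      apply div_le_self (by positivity) (by linarith)
    linarith [this, show ρ * (|L| * t) = t * (ρ * |L|) from by ring]
  have habs : |ρ * E / (t * (t + 1)) - ρ * x / (t + 1)|
      ≤ ρ * E / (t * (t + 1)) + ρ * |x| / (t + 1) := by
    refine (abs_sub _ _).trans ?_
    rw [abs_of_nonneg (by positivity), abs_div, abs_of_pos ht1, abs_mul,
      abs_of_pos hρ0]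
  -- bound the bracket by C'
  have hbracket : ρ * (L ^ 2 * Real.exp (max x 0)) + ρ * |L| ≤ C' := by
    rcases le_total ρ 1 with h1 | h1
    · have hL0 : L ≤ 0 := Real.log_nonpos hρ0.le h1
      have hx0 : x ≤ 0 := by
        rw [hxdef]; exact mul_nonpos_of_nonpos_of_nonneg hL0 ht0.le
      rw [max_eq_right hx0, Real.exp_zero, mul_one]
      obtain ⟨hA, hB⟩ := aux_small ρ hρ0 h1
      have hp1 : 0 ≤ w₀ ^ 2 * Real.exp (3 * w₀) := by positivity
      have hp2 : 0 ≤ w₀ * Real.exp w₀ := by positivity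
      rw [hC']
      linarith
    · have hL0 : 0 ≤ L := Real.log_nonneg h1
      have hLw : L ≤ w₀ := by
        rw [hLdef, ← Real.log_exp w₀]
        exact Real.log_le_log hρ0 hρe
      have hxw : max x 0 ≤ 2 * w₀ := by
        apply max_le _ (by linarith)
        rw [hxdef]
        calc L * t ≤ w₀ * 2 := mul_le_mul hLw ht2 ht0.le hw.le
          _ = 2 * w₀ := by ring
      have hexm : Real.exp (max x 0) ≤ Real.exp (2 * w₀) := Real.exp_le_exp.2 hxw
      have hterm1 : ρ * (L ^ 2 * Real.exp (max x 0))
          ≤ Real.exp w₀ * (w₀ ^ 2 * Real.exp (2 * w₀)) := by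
        apply mul_le_mul hρe _ (by positivity) (Real.exp_pos w₀).le
        apply mul_le_mul _ hexm (Real.exp_pos _).le (by positivity)
        nlinarith
      have heq : Real.exp w₀ * (w₀ ^ 2 * Real.exp (2 * w₀))
          = w₀ ^ 2 * Real.exp (3 * w₀) := by
        rw [show (3:ℝ) * w₀ = w₀ + 2 * w₀ by ring, Real.exp_add]; ring
      have hterm2 : ρ * |L| ≤ Real.exp w₀ * w₀ := by
        rw [abs_of_nonneg hL0]
        exact mul_le_mul hρe hLw hL0 (Real.exp_pos w₀).le
      rw [heq] at hterm1
      rw [hC']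
      linarith
  calc |ρ * E / (t * (t + 1)) - ρ * x / (t + 1)|
      ≤ ρ * E / (t * (t + 1)) + ρ * |x| / (t + 1) := habs
    _ ≤ t * (ρ * (L ^ 2 * Real.exp (max x 0))) + t * (ρ * |L|) := by linarith
    _ = t * (ρ * (L ^ 2 * Real.exp (max x 0)) + ρ * |L|) := by ring
    _ ≤ t * C' := by
        apply mul_le_mul_of_nonneg_left hbracket ht0.le
    _ = 2 * C' * θ := by rw [htdef]; ring
end
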